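/- A continuous flow φ on a compact metric space is kinematic expansive if and only if for all ε > 0 there exists δ > 0 such that whenever x, y ∈ X and s : ℝ → ℝ is a continuous surjection with s(0) = 0 satisfying max{d(φ_t(x), φ_{s(t)}(x)), d(φ_t(x), φ_{s(t)}(y))} < δ for all t ∈ ℝ, then y = φ_τ(x) for some τ ∈ (−ε, ε). -/

import Mathlib

theorem stmt12 {X : Type*} [MetricSpace X] [CompactSpace X]
    (φ : ℝ → X → X)
    (hcont : Continuous fun p : ℝ × X => φ p.1 p.2)
    (h0 : ∀ x, φ 0 x = x)
    (hadd : ∀ t s x, φ (t + s) x = φ t (φ s x)) :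
    (∀ ε > (0:ℝ), ∃ δ > (0:ℝ), ∀ x y : X,
        (∀ t, dist (φ t x) (φ t y) < δ) → ∃ τ : ℝ, |τ| < ε ∧ y = φ τ x) ↔
      (∀ ε > (0:ℝ), ∃ δ > (0:ℝ), ∀ (x y : X) (s : ℝ → ℝ),
        Continuous s → Function.Surjective s → s 0 = 0 →
        (∀ t, max (dist (φ t x) (φ (s t) x)) (dist (φ t x) (φ (s t) y)) < δ) →
        ∃ τ : ℝ, |τ| < ε ∧ y = φ τ x) := by
  constructor
  · intro h ε hε
    obtain ⟨δ, hδ, H⟩ := h ε hε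
    refine ⟨δ / 2, by linarith, fun x y s hs hsurj hs0 hmax => ?_⟩
    apply H x y
    intro u
    obtain ⟨t, ht⟩ := hsurj u
    have h1 := hmax t
    rw [ht] at h1
    have hx : dist (φ t x) (φ u x) < δ / 2 := lt_of_le_of_lt (le_max_left _ _) h1
    have hy : dist (φ t x) (φ u y) < δ / 2 := lt_of_le_of_lt (le_max_right _ _) h1
    calc dist (φ u x) (φ u y) ≤ dist (φ u x) (φ t x) + dist (φ t x) (φ u y) :=
          dist_triangle _ _ _
      _ < δ / 2 + δ / 2 := by rw [dist_comm]; exact add_lt_add hx hy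
      _ = δ := by ring
  · intro h ε hε
    obtain ⟨δ, hδ, H⟩ := h ε hε
    refine ⟨δ, hδ, fun x y hd => ?_⟩
    exact H x y id continuous_id Function.surjective_id rfl fun t => by
      exact max_lt (by simpa using hδ) (by simpa using hd t)
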